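/- arXiv:1911.02540 — 2 statements merged into one kernel-verified Lean document; each statement's English description precedes it below -/
import Mathlib

section
/- Let S ⊆ ℕ be a finite set with 0 ∈ S and |S| = k, and let a ∈ ℕ satisfy a > max S. Then z_{S ∪ {a}} ≤ z_S + (1/π)·arctan(1/√k). -/
open Real Finset

/-- `g_S(t) = ∑_{e ∈ S} t^(2e)`. -/
noncomputable def gS (S : Finset ℕ) (t : ℝ) : ℝ := ∑ e ∈ S, t ^ (2 * e)

/-- `h_S(t) = ∑_{e ∈ S} e² t^(2e-2)` (the term for `e = 0` being `0`). -/
noncomputable def hS (S : Finset ℕ) (t : ℝ) : ℝ := ∑ e ∈ S, (e : ℝ) ^ 2 * t ^ (2 * e - 2)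

/-- `q_S(t) = ∑_{e ∈ S} e t^(2e-1)` (the term for `e = 0` being `0`). -/
noncomputable def qS (S : Finset ℕ) (t : ℝ) : ℝ := ∑ e ∈ S, (e : ℝ) * t ^ (2 * e - 1)

/-- `E_S(t) = g_S(t) h_S(t) - q_S(t)²`. -/
noncomputable def ES (S : Finset ℕ) (t : ℝ) : ℝ := gS S t * hS S t - qS S t ^ 2

/-- The expected number of real zeros in `(0,1)`, given by the Edelman–Kostlan integral. -/
noncomputable def zS (S : Finset ℕ) : ℝ :=
  (1 / Real.pi) * ∫ t in (0 : ℝ)..1, Real.sqrt (ES S t) / gS S t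

noncomputable def PS (S : Finset ℕ) (t : ℝ) : ℝ := ∑ e ∈ S, (e : ℝ) * t ^ (2 * e)
noncomputable def H2S (S : Finset ℕ) (t : ℝ) : ℝ := ∑ e ∈ S, (e : ℝ) ^ 2 * t ^ (2 * e)
noncomputable def E2S (S : Finset ℕ) (t : ℝ) : ℝ := gS S t * H2S S t - PS S t ^ 2

lemma pow_tm_nonneg (t : ℝ) (e : ℕ) : 0 ≤ t ^ (2 * e) := by
  rw [two_mul, pow_add]; exact mul_self_nonneg _

lemma aux_pow1 (e : ℕ) (t : ℝ) : (e : ℝ) * t ^ (2 * e - 1) * t = (e : ℝ) * t ^ (2 * e) := by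
  cases e with
  | zero => simp
  | succ n =>
    have h1 : 2 * (n + 1) - 1 = 2 * n + 1 := by omega
    have h2 : 2 * (n + 1) = (2 * n + 1) + 1 := by omega
    rw [h1, h2, pow_succ]; ring

lemma aux_pow2 (e : ℕ) (t : ℝ) : (e : ℝ) ^ 2 * t ^ (2 * e - 2) * t ^ 2 = (e : ℝ) ^ 2 * t ^ (2 * e) := by
  cases e with
  | zero => simp
  | succ n =>
    have h1 : 2 * (n + 1) - 2 = 2 * n := by omega
    have h2 : 2 * (n + 1) = 2 * n + 2 := by omega
    rw [h1, h2, pow_add]; ring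

lemma tQ_eq (S : Finset ℕ) (t : ℝ) : t * qS S t = PS S t := by
  rw [qS, PS, Finset.mul_sum]
  exact Finset.sum_congr rfl fun e _ => by rw [← aux_pow1]; ring

lemma t2H_eq (S : Finset ℕ) (t : ℝ) : t ^ 2 * hS S t = H2S S t := by
  rw [hS, H2S, Finset.mul_sum]
  exact Finset.sum_congr rfl fun e _ => by rw [← aux_pow2]; ring

lemma t2E_eq (S : Finset ℕ) (t : ℝ) : t ^ 2 * ES S t = E2S S t := by
  rw [ES, E2S, ← t2H_eq, ← tQ_eq]; ring

lemma one_le_gS (S : Finset ℕ) (h0 : 0 ∈ S) (t : ℝ) : 1 ≤ gS S t := by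
  have h := Finset.single_le_sum (f := fun e => t ^ (2 * e))
    (fun e _ => pow_tm_nonneg t e) h0
  simpa [gS] using h

lemma gS_pos (S : Finset ℕ) (h0 : 0 ∈ S) (t : ℝ) : 0 < gS S t :=
  lt_of_lt_of_le one_pos (one_le_gS S h0 t)

lemma E2S_nonneg (S : Finset ℕ) (t : ℝ) : 0 ≤ E2S S t := by
  have h := Finset.sum_mul_sq_le_sq_mul_sq S (fun e => t ^ e) (fun e => (e : ℝ) * t ^ e)
  rw [E2S, gS, H2S, PS]
  have h1 : ∀ e : ℕ, t ^ e * ((e : ℝ) * t ^ e) = (e : ℝ) * t ^ (2 * e) := by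
    intro e; rw [two_mul, pow_add]; ring
  have h2 : ∀ e : ℕ, (t ^ e) ^ 2 = t ^ (2 * e) := by
    intro e; rw [two_mul, pow_add]; ring
  have h3 : ∀ e : ℕ, ((e : ℝ) * t ^ e) ^ 2 = (e : ℝ) ^ 2 * t ^ (2 * e) := by
    intro e; rw [two_mul, pow_add]; ring
  simp only [h1, h2, h3] at h
  linarith

lemma gS_insert (S : Finset ℕ) (a : ℕ) (haS : a ∉ S) (t : ℝ) :
    gS (insert a S) t = t ^ (2 * a) + gS S t := Finset.sum_insert haS

lemma E2_insert (S : Finset ℕ) (a : ℕ) (haS : a ∉ S) (t : ℝ) :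
    gS S t * E2S (insert a S) t
      = gS (insert a S) t * E2S S t + t ^ (2 * a) * ((a : ℝ) * gS S t - PS S t) ^ 2 := by
  simp only [E2S, gS, H2S, PS, Finset.sum_insert haS]
  ring

lemma hasDerivAt_gS (S : Finset ℕ) (t : ℝ) :
    HasDerivAt (fun t => gS S t) (2 * qS S t) t := by
  have h : HasDerivAt (fun t : ℝ => ∑ e ∈ S, t ^ (2 * e))
      (∑ e ∈ S, ((2 * e : ℕ) : ℝ) * t ^ (2 * e - 1)) t :=
    HasDerivAt.fun_sum fun e _ => hasDerivAt_pow (2 * e) t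
  refine h.congr_deriv ?_
  rw [qS, Finset.mul_sum]
  exact Finset.sum_congr rfl fun e _ => by push_cast; ring

lemma hasDerivAt_theta (S : Finset ℕ) (h0 : 0 ∈ S) (a : ℕ) (ha1 : 1 ≤ a) (t : ℝ) :
    HasDerivAt (fun t => Real.arctan (t ^ a / Real.sqrt (gS S t)))
      (t ^ (a - 1) * ((a : ℝ) * gS S t - t * qS S t) /
        (Real.sqrt (gS S t) * (t ^ (2 * a) + gS S t))) t := by
  have hG : 0 < gS S t := gS_pos S h0 t
  have hs : 0 < Real.sqrt (gS S t) := Real.sqrt_pos.2 hG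
  have hg := hasDerivAt_gS S t
  have hsq : HasDerivAt (fun t => Real.sqrt (gS S t))
      (2 * qS S t / (2 * Real.sqrt (gS S t))) t := hg.sqrt hG.ne'
  have hu := (hasDerivAt_pow a t).div hsq hs.ne'
  have harc := (Real.hasDerivAt_arctan (t ^ a / Real.sqrt (gS S t))).comp t hu
  refine harc.congr_deriv ?_
  have hss : Real.sqrt (gS S t) ^ 2 = gS S t := Real.sq_sqrt hG.le
  have hta : t ^ a = t ^ (a - 1) * t := by
    conv_lhs => rw [show a = (a - 1) + 1 by omega, pow_succ]
  have h2a : t ^ (2 * a) = (t ^ (a - 1) * t) ^ 2 := by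
    rw [← hta, ← pow_mul, mul_comm a 2]
  rw [h2a, hta]
  set s := Real.sqrt (gS S t) with hsdef
  rw [← hss]
  generalize t ^ (a - 1) = x
  have hne : (1 : ℝ) + (x * t / s) ^ 2 ≠ 0 := by positivity
  field_simp
  ring

set_option maxHeartbeats 2000000 in
lemma key_ineq (S : Finset ℕ) (h0 : 0 ∈ S) (a : ℕ) (haS : a ∉ S)
    (hub : ∀ e ∈ S, e < a) {t : ℝ} (ht : 0 < t) :
    Real.sqrt (ES (insert a S) t) / gS (insert a S) t ≤
      Real.sqrt (ES S t) / gS S t +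
        t ^ (a - 1) * ((a : ℝ) * gS S t - t * qS S t) /
          (Real.sqrt (gS S t) * (t ^ (2 * a) + gS S t)) := by
  have hG : 0 < gS S t := gS_pos S h0 t
  have hG1 : 1 ≤ gS S t := one_le_gS S h0 t
  have hGt_eq : gS (insert a S) t = t ^ (2 * a) + gS S t := gS_insert S a haS t
  have htp : 0 ≤ t ^ (2 * a) := pow_tm_nonneg t a
  have hGt : 0 < gS (insert a S) t := by rw [hGt_eq]; linarith
  have ht2 : (t : ℝ) ^ 2 ≠ 0 := pow_ne_zero 2 ht.ne'
  have hES_T : ES (insert a S) t = E2S (insert a S) t / t ^ 2 := by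
    rw [eq_div_iff ht2, ← t2E_eq]; ring
  have hES_S : ES S t = E2S S t / t ^ 2 := by
    rw [eq_div_iff ht2, ← t2E_eq]; ring
  have hst2 : Real.sqrt (t ^ 2) = t := by
    rw [Real.sqrt_sq ht.le]
  have hsqT : Real.sqrt (ES (insert a S) t)
      = Real.sqrt (E2S (insert a S) t) / t := by
    rw [hES_T, Real.sqrt_div (E2S_nonneg _ _), hst2]
  have hsqS : Real.sqrt (ES S t) = Real.sqrt (E2S S t) / t := by
    rw [hES_S, Real.sqrt_div (E2S_nonneg _ _), hst2]
  have hu2 : Real.sqrt (E2S S t) ^ 2 = E2S S t := Real.sq_sqrt (E2S_nonneg _ _)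
  have hv2 : Real.sqrt (E2S (insert a S) t) ^ 2 = E2S (insert a S) t :=
    Real.sq_sqrt (E2S_nonneg _ _)
  have hs2 : Real.sqrt (gS S t) ^ 2 = gS S t := Real.sq_sqrt hG.le
  have hw2 : Real.sqrt (gS (insert a S) t) ^ 2 = gS (insert a S) t := Real.sq_sqrt hGt.le
  have hu0 : 0 ≤ Real.sqrt (E2S S t) := Real.sqrt_nonneg _
  have hv0 : 0 ≤ Real.sqrt (E2S (insert a S) t) := Real.sqrt_nonneg _
  have hs0 : 0 < Real.sqrt (gS S t) := Real.sqrt_pos.2 hG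
  have hw0 : 0 < Real.sqrt (gS (insert a S) t) := Real.sqrt_pos.2 hGt
  have hsw : Real.sqrt (gS S t) ≤ Real.sqrt (gS (insert a S) t) :=
    Real.sqrt_le_sqrt (by linarith)
  have hRpos : 0 ≤ (a : ℝ) * gS S t - PS S t := by
    have hP : PS S t ≤ (a : ℝ) * gS S t := by
      rw [PS, gS, Finset.mul_sum]
      exact Finset.sum_le_sum fun e he =>
        mul_le_mul_of_nonneg_right (by exact_mod_cast (hub e he).le) (pow_tm_nonneg t e)
    linarith
  have hid : gS S t * Real.sqrt (E2S (insert a S) t) ^ 2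
      = gS (insert a S) t * Real.sqrt (E2S S t) ^ 2
        + t ^ (2 * a) * ((a : ℝ) * gS S t - PS S t) ^ 2 := by
    rw [hu2, hv2]; exact E2_insert S a haS t
  have hta2 : t ^ (2 * a) = (t ^ a) ^ 2 := by rw [mul_comm 2 a, pow_mul]
  have htan : 0 ≤ t ^ a := pow_nonneg ht.le a
  set G := gS S t with hGdef
  set Gt := gS (insert a S) t with hGtdef
  set u := Real.sqrt (E2S S t) with hudef
  set v := Real.sqrt (E2S (insert a S) t) with hvdef
  set s := Real.sqrt G with hsdef
  set w := Real.sqrt Gt with hwdef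
  set R := (a : ℝ) * G - PS S t with hRdef
  -- step 1 : v * s ≤ w * u + t^a * R
  have hprod : 0 ≤ w * u + t ^ a * R :=
    add_nonneg (mul_nonneg hw0.le hu0) (mul_nonneg htan hRpos)
  have hsq : (v * s) ^ 2 ≤ (w * u + t ^ a * R) ^ 2 := by
    nlinarith [mul_nonneg (mul_nonneg hw0.le hu0) (mul_nonneg htan hRpos)]
  have step1 : v * s ≤ w * u + t ^ a * R := by
    calc v * s = Real.sqrt ((v * s) ^ 2) :=
          (Real.sqrt_sq (mul_nonneg hv0 hs0.le)).symm
      _ ≤ Real.sqrt ((w * u + t ^ a * R) ^ 2) := Real.sqrt_le_sqrt hsq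
      _ = w * u + t ^ a * R := Real.sqrt_sq hprod
  -- step 2 : w * G ≤ Gt * s
  have step2 : w * G ≤ Gt * s := by
    rw [← hs2, ← hw2]
    nlinarith [mul_nonneg (mul_nonneg hw0.le hs0.le) (sub_nonneg.2 hsw)]
  -- combined polynomial form
  have goal' : v * G * s ≤ u * Gt * s + t ^ a * R * G := by
    nlinarith [mul_le_mul_of_nonneg_right step1 hG.le,
      mul_le_mul_of_nonneg_right step2 hu0]
  -- convert to division form
  have ha1 : 1 ≤ a := hub 0 h0
  have hta : t ^ a = t ^ (a - 1) * t := by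
    conv_lhs => rw [show a = (a - 1) + 1 by omega, pow_succ]
  rw [hta] at goal'
  have hfin : v / (t * Gt) ≤ u / (t * G) + t ^ (a - 1) * R / (s * Gt) := by
    rw [div_add_div _ _ (by positivity) (by positivity),
      div_le_div_iff₀ (by positivity) (by positivity)]
    nlinarith [mul_le_mul_of_nonneg_right goal' (mul_pos ht hGt).le]
  rw [hsqT, hsqS, tQ_eq, ← hGt_eq]
  rw [div_div, div_div]
  exact hfin


lemma cont_gS (S : Finset ℕ) : Continuous fun t => gS S t := by
  unfold gS; exact continuous_finset_sum _ fun e _ => continuous_pow _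

lemma cont_qS (S : Finset ℕ) : Continuous fun t => qS S t := by
  unfold qS; exact continuous_finset_sum _ fun e _ => continuous_const.mul (continuous_pow _)

lemma cont_ES (S : Finset ℕ) : Continuous fun t => ES S t := by
  unfold ES
  have hh : Continuous fun t => hS S t := by
    unfold hS; exact continuous_finset_sum _ fun e _ => continuous_const.mul (continuous_pow _)
  exact ((cont_gS S).mul hh).sub ((cont_qS S).pow 2)

lemma cont_f (S : Finset ℕ) (h0 : 0 ∈ S) :
    Continuous fun t => Real.sqrt (ES S t) / gS S t :=
  (Real.continuous_sqrt.comp (cont_ES S)).div (cont_gS S)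
    fun t => (gS_pos S h0 t).ne'

theorem stmt10 (S : Finset ℕ) (k : ℕ) (h0 : 0 ∈ S) (hcard : S.card = k)
    (a : ℕ) (ha : S.max' ⟨0, h0⟩ < a) :
    zS (insert a S) ≤ zS S + (1 / Real.pi) * Real.arctan (1 / Real.sqrt k) := by
  have hub : ∀ e ∈ S, e < a := fun e he => lt_of_le_of_lt (S.le_max' e he) ha
  have haS : a ∉ S := fun h => absurd (hub a h) (lt_irrefl a)
  have ha1 : 1 ≤ a := hub 0 h0
  have h0T : 0 ∈ insert a S := Finset.mem_insert_of_mem h0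
  set D : ℝ → ℝ := fun t =>
    t ^ (a - 1) * ((a : ℝ) * gS S t - t * qS S t) /
      (Real.sqrt (gS S t) * (t ^ (2 * a) + gS S t)) with hDdef
  have hcD : Continuous D := by
    apply Continuous.div
    · exact ((continuous_pow _).mul
        ((continuous_const.mul (cont_gS S)).sub (continuous_id.mul (cont_qS S))))
    · exact (Real.continuous_sqrt.comp (cont_gS S)).mul ((continuous_pow _).add (cont_gS S))
    · intro t
      have h1 : 0 < Real.sqrt (gS S t) := Real.sqrt_pos.2 (gS_pos S h0 t)
      have h2 : 0 < t ^ (2 * a) + gS S t := by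
        have := pow_tm_nonneg t a
        have := gS_pos S h0 t
        linarith
      positivity
  have hintD : ∫ t in (0:ℝ)..1, D t = Real.arctan (1 / Real.sqrt k) := by
    rw [intervalIntegral.integral_eq_sub_of_hasDerivAt
      (f := fun t => Real.arctan (t ^ a / Real.sqrt (gS S t)))
      (fun t _ => hasDerivAt_theta S h0 a ha1 t) (hcD.intervalIntegrable 0 1)]
    have hg1 : gS S 1 = (k : ℝ) := by
      unfold gS; simp [hcard]
    have h0a : (0 : ℝ) ^ a = 0 := zero_pow (by omega)
    rw [hg1, one_pow, h0a, zero_div, Real.arctan_zero, sub_zero, one_div]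
    try rfl
    try simp
  -- pointwise a.e. inequality
  have hintT : IntervalIntegrable (fun t => Real.sqrt (ES (insert a S) t) / gS (insert a S) t)
      MeasureTheory.volume 0 1 := (cont_f _ h0T).intervalIntegrable 0 1
  have hintS : IntervalIntegrable (fun t => Real.sqrt (ES S t) / gS S t)
      MeasureTheory.volume 0 1 := (cont_f _ h0).intervalIntegrable 0 1
  have hintSD : IntervalIntegrable (fun t => Real.sqrt (ES S t) / gS S t + D t)
      MeasureTheory.volume 0 1 := ((cont_f _ h0).add hcD).intervalIntegrable 0 1
  have hmono : (∫ t in (0:ℝ)..1, Real.sqrt (ES (insert a S) t) / gS (insert a S) t)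
      ≤ ∫ t in (0:ℝ)..1, (Real.sqrt (ES S t) / gS S t + D t) := by
    apply intervalIntegral.integral_mono_ae_restrict zero_le_one hintT hintSD
    rw [Filter.EventuallyLE, MeasureTheory.ae_restrict_iff' measurableSet_Icc, MeasureTheory.ae_iff]
    refine MeasureTheory.measure_mono_null (fun t htm => ?_) (Real.volume_singleton (a := 0))
    simp only [Set.mem_setOf_eq, not_forall] at htm
    obtain ⟨hmem, hlt⟩ := htm
    simp only [Set.mem_singleton_iff]
    by_contra hne
    have ht : 0 < t := lt_of_le_of_ne hmem.1 (Ne.symm hne)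
    exact hlt (key_ineq S h0 a haS hub ht)
  have hsplit : (∫ t in (0:ℝ)..1, (Real.sqrt (ES S t) / gS S t + D t))
      = (∫ t in (0:ℝ)..1, Real.sqrt (ES S t) / gS S t) + ∫ t in (0:ℝ)..1, D t :=
    intervalIntegral.integral_add hintS (hcD.intervalIntegrable 0 1)
  have hpi : 0 ≤ 1 / Real.pi := by positivity
  unfold zS
  calc (1 / Real.pi) * ∫ t in (0:ℝ)..1, Real.sqrt (ES (insert a S) t) / gS (insert a S) t
      ≤ (1 / Real.pi) * ((∫ t in (0:ℝ)..1, Real.sqrt (ES S t) / gS S t)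
          + Real.arctan (1 / Real.sqrt k)) := by
        apply mul_le_mul_of_nonneg_left _ hpi
        rw [← hintD, ← hsplit]
        exact hmono
    _ = (1 / Real.pi) * (∫ t in (0:ℝ)..1, Real.sqrt (ES S t) / gS S t)
          + (1 / Real.pi) * Real.arctan (1 / Real.sqrt k) := by ring
end

section
/- For k ∈ ℕ let S = {0, 1} ∪ {2^(2^i) : 1 ≤ i ≤ k−1} and a = 2^(2^k), and define W : ℝ → ℝ by W(t) = (1/(g_S(t)·t^{2a}))·((2a·t^{2a−1}·g_S(t) − (deriv g_S t)·t^{2a})/(g_S(t) + t^{2a}))². Then there exists a real constant c > 0 and K ∈ ℕ such that for all k ≥ K, ∫_{1−1/(2a)}^{1} √(W(t)) dt ≥ c/√k. -/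
open Real Finset

/-- The set `S = {0,1} ∪ {2^(2^i) : 1 ≤ i ≤ k-1}`. -/
def lbSet (k : ℕ) : Finset ℕ := {0, 1} ∪ (Finset.Icc 1 (k - 1)).image (fun i => 2 ^ (2 ^ i))

/-- The function `W` from Lemma on the lower bound, with `a = 2^(2^k)`. -/
noncomputable def Wfun (k : ℕ) (t : ℝ) : ℝ :=
  (1 / (gS (lbSet k) t * t ^ (2 * 2 ^ 2 ^ k))) *
    ((2 * (2 ^ 2 ^ k : ℕ) * t ^ (2 * 2 ^ 2 ^ k - 1) * gS (lbSet k) t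
        - deriv (gS (lbSet k)) t * t ^ (2 * 2 ^ 2 ^ k)) /
      (gS (lbSet k) t + t ^ (2 * 2 ^ 2 ^ k))) ^ 2

/-! ### Auxiliary lemmas -/

lemma lbSet_zero_mem (k : ℕ) : 0 ∈ lbSet k := by simp [lbSet]

lemma lbSet_card (k : ℕ) (hk : 1 ≤ k) : (lbSet k).card ≤ k + 1 := by
  refine le_trans (Finset.card_union_le _ _) ?_
  have h1 : ({0,1} : Finset ℕ).card ≤ 2 := by simp
  have h2 : ((Finset.Icc 1 (k-1)).image (fun i => 2^(2^i))).card ≤ k - 1 := by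
    refine le_trans Finset.card_image_le ?_
    simp [Nat.card_Icc]
  omega

lemma lbSet_le (k : ℕ) {e : ℕ} (he : e ∈ lbSet k) : e ≤ 2 ^ 2 ^ (k-1) := by
  have h2 : 2 ≤ 2 ^ 2 ^ (k-1) := by
    calc (2:ℕ) = 2^1 := by norm_num
    _ ≤ _ := Nat.pow_le_pow_right (by norm_num) Nat.one_le_two_pow
  simp only [lbSet, Finset.mem_union, Finset.mem_insert, Finset.mem_singleton,
    Finset.mem_image] at he
  rcases he with (h|h) | ⟨i, hi, rfl⟩
  · omega
  · omega
  · refine Nat.pow_le_pow_right (by norm_num) (Nat.pow_le_pow_right (by norm_num) ?_)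
    simp only [Finset.mem_Icc] at hi; omega

lemma gS_one_le (S : Finset ℕ) (h0 : 0 ∈ S) (t : ℝ) (ht : 0 ≤ t) : 1 ≤ gS S t := by
  have := Finset.single_le_sum (f := fun e => t ^ (2*e)) (fun e _ => pow_nonneg ht _) h0
  simpa [gS] using this

lemma gS_le_card (S : Finset ℕ) (t : ℝ) (ht0 : 0 ≤ t) (ht1 : t ≤ 1) : gS S t ≤ S.card := by
  calc gS S t ≤ ∑ _e ∈ S, 1 := Finset.sum_le_sum fun e _ => pow_le_one₀ ht0 ht1
  _ = S.card := by simp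

lemma gS_hasDerivAt (S : Finset ℕ) (t : ℝ) :
    HasDerivAt (gS S) (∑ e ∈ S, ((2*e : ℕ) : ℝ) * t ^ (2*e - 1)) t :=
  HasDerivAt.fun_sum fun e _ => hasDerivAt_pow (2*e) t

lemma gS_deriv (S : Finset ℕ) (t : ℝ) :
    deriv (gS S) t = ∑ e ∈ S, ((2*e : ℕ) : ℝ) * t ^ (2*e - 1) := (gS_hasDerivAt S t).deriv

lemma gS_deriv_continuous (S : Finset ℕ) : Continuous (deriv (gS S)) := by
  have : deriv (gS S) = fun t => ∑ e ∈ S, ((2*e : ℕ) : ℝ) * t ^ (2*e - 1) :=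
    funext fun t => gS_deriv S t
  rw [this]
  exact continuous_finset_sum _ fun e _ => continuous_const.mul (continuous_pow _)

lemma gS_continuous (S : Finset ℕ) : Continuous (gS S) :=
  continuous_finset_sum _ fun e _ => continuous_pow _

lemma gS_deriv_nonneg (S : Finset ℕ) (t : ℝ) (ht : 0 ≤ t) : 0 ≤ deriv (gS S) t := by
  rw [gS_deriv]
  exact Finset.sum_nonneg fun e _ => mul_nonneg (by positivity) (pow_nonneg ht _)

lemma gS_deriv_le (S : Finset ℕ) (b : ℕ) (hb : ∀ e ∈ S, e ≤ b) (t : ℝ)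
    (ht0 : 0 ≤ t) (ht1 : t ≤ 1) : deriv (gS S) t ≤ S.card * (2*b) := by
  rw [gS_deriv]
  calc ∑ e ∈ S, ((2*e : ℕ) : ℝ) * t ^ (2*e - 1)
      ≤ ∑ _e ∈ S, ((2*b : ℕ) : ℝ) := by
        refine Finset.sum_le_sum fun e he => ?_
        have h1 : t ^ (2*e-1) ≤ 1 := pow_le_one₀ ht0 ht1
        have h2 : ((2*e:ℕ):ℝ) ≤ ((2*b:ℕ):ℝ) := by
          exact_mod_cast Nat.mul_le_mul_left 2 (hb e he)
        calc ((2*e : ℕ) : ℝ) * t ^ (2*e - 1) ≤ ((2*e:ℕ):ℝ) * 1 := by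
              exact mul_le_mul_of_nonneg_left h1 (by positivity)
        _ ≤ ((2*b:ℕ):ℝ) := by rw [mul_one]; exact h2
  _ = S.card * (2*b) := by rw [Finset.sum_const, nsmul_eq_mul]; push_cast; ring

lemma nat_aux1 : ∀ j : ℕ, 5 ≤ j → j + 4 ≤ 2 ^ j := by
  intro j hj
  induction j with
  | zero => omega
  | succ n ih =>
    rcases Nat.lt_or_ge n 5 with h | h
    · interval_cases n <;> simp_all
    · have := ih (by omega)
      have h2 : 1 ≤ 2^n := Nat.one_le_two_pow
      calc n + 1 + 4 ≤ 2^n + 2^n := by omega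
      _ = 2^(n+1) := by ring

lemma nat_aux' (k : ℕ) (hk : 6 ≤ k) : 8 * (k + 1) ≤ 2 ^ 2 ^ (k - 1) := by
  have h1 : k + 1 ≤ 2 ^ k := Nat.lt_two_pow_self (n := k)
  have h2 : 8 * (k + 1) ≤ 2 ^ (k + 3) := by
    calc 8 * (k+1) ≤ 8 * 2^k := by omega
    _ = 2^(k+3) := by ring
  have h3 : k + 3 + 4 ≤ 2 ^ (k - 1) + 4 := by
    have := nat_aux1 (k-1) (by omega)
    omega
  have h4 : 2 ^ (k+3) ≤ 2 ^ 2 ^ (k-1) := Nat.pow_le_pow_right (by norm_num) (by omega)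
  omega

lemma b_sq (k : ℕ) (hk : 1 ≤ k) : 2 ^ 2 ^ (k-1) * 2 ^ 2 ^ (k-1) = 2 ^ 2 ^ k := by
  rw [← pow_add]
  congr 1
  have h : k - 1 + 1 = k := by omega
  conv_rhs => rw [← h]
  rw [pow_succ]
  omega

set_option maxHeartbeats 2000000 in
lemma key (k : ℕ) (hk : 6 ≤ k) (t : ℝ)
    (ht : t ∈ Set.Icc (1 - 1 / (2 * ((2:ℝ) ^ 2 ^ k))) 1) :
    ((2:ℝ) ^ 2 ^ k) / (8 * Real.sqrt (k+1)) ≤ Real.sqrt (Wfun k t) := by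
  have hk1 : 1 ≤ k := by omega
  set a : ℕ := 2 ^ 2 ^ k with ha
  set bb : ℕ := 2 ^ 2 ^ (k-1) with hbdef
  set A : ℝ := ((a : ℕ) : ℝ) with hAdef
  have hA2 : (2:ℝ) ≤ A := by
    have h : 2 ≤ a := by
      rw [ha]
      have : (2:ℕ)^1 ≤ 2^2^k := Nat.pow_le_pow_right (by norm_num) Nat.one_le_two_pow
      simpa using this
    rw [hAdef]; exact_mod_cast h
  have hApos : (0:ℝ) < A := by linarith
  have hAeq : ((2:ℝ) ^ 2 ^ k) = A := by rw [hAdef, ha]; push_cast; ring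
  rw [hAeq] at ht ⊢
  have ht1 : t ≤ 1 := ht.2
  have htlb : 1 - 1/(2*A) ≤ t := ht.1
  have hfrac : 1/(2*A) ≤ 1/4 := by
    rw [div_le_div_iff₀ (by linarith) (by norm_num)]; linarith
  have ht0 : (0:ℝ) < t := by linarith
  -- abbreviations
  set g : ℝ := gS (lbSet k) t with hgdef
  set D : ℝ := deriv (gS (lbSet k)) t with hDdef
  set T : ℝ := t ^ (2 * a) with hTdef
  have hg1 : 1 ≤ g := gS_one_le _ (lbSet_zero_mem k) t ht0.le
  have hgk : g ≤ (k:ℝ) + 1 := by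
    have h1 := gS_le_card (lbSet k) t ht0.le ht1
    have h2 : ((lbSet k).card : ℝ) ≤ (k:ℝ) + 1 := by exact_mod_cast lbSet_card k hk1
    linarith
  have hT0 : 0 < T := pow_pos ht0 _
  have hT1 : T ≤ 1 := pow_le_one₀ ht0.le ht1
  -- lower bound on T and t^(2a-1)
  have hta : 1/2 ≤ t ^ a := by
    have hber : 1 + (a:ℝ) * (-(1/(2*A))) ≤ (1 + (-(1/(2*A)))) ^ a :=
      one_add_mul_le_pow (by linarith) a
    have e1 : 1 + (a:ℝ) * (-(1/(2*A))) = 1/2 := by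
      rw [hAdef] at *
      field_simp
      ring
    have e2 : (1 + (-(1/(2*A)))) = 1 - 1/(2*A) := by ring
    rw [e1, e2] at hber
    calc (1:ℝ)/2 ≤ (1 - 1/(2*A))^a := hber
    _ ≤ t ^ a := pow_le_pow_left₀ (by linarith) htlb a
  have hT4 : 1/4 ≤ T := by
    have : T = (t ^ a) ^ 2 := by rw [hTdef, ← pow_mul, mul_comm]
    rw [this]
    nlinarith [pow_pos ht0 a]
  have htq : 1/4 ≤ t ^ (2*a - 1) := by
    have h := pow_le_pow_of_le_one ht0.le ht1 (show 2*a - 1 ≤ 2*a by omega)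
    calc (1:ℝ)/4 ≤ T := hT4
    _ ≤ t ^ (2*a-1) := h
  have htq1 : t ^ (2*a - 1) ≤ 1 := pow_le_one₀ ht0.le ht1
  -- derivative bounds
  have hD0 : 0 ≤ D := gS_deriv_nonneg _ t ht0.le
  have hDle : D ≤ ((k:ℝ)+1) * (2*(bb:ℝ)) := by
    have h1 := gS_deriv_le (lbSet k) bb (fun e he => lbSet_le k he) t ht0.le ht1
    have h2 : ((lbSet k).card : ℝ) ≤ (k:ℝ)+1 := by exact_mod_cast lbSet_card k hk1
    have hbb0 : (0:ℝ) ≤ 2*(bb:ℝ) := by positivity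
    calc D ≤ ((lbSet k).card : ℝ) * (2*(bb:ℝ)) := by exact_mod_cast h1
    _ ≤ ((k:ℝ)+1) * (2*(bb:ℝ)) := mul_le_mul_of_nonneg_right h2 hbb0
  -- bb facts
  have hbbA : (bb:ℝ) * (bb:ℝ) = A := by
    have h : bb * bb = a := by rw [ha, hbdef]; exact b_sq k hk1
    rw [hAdef]; exact_mod_cast h
  have hb8 : 8 * ((k:ℝ)+1) ≤ (bb:ℝ) := by exact_mod_cast nat_aux' k hk
  have hbb0 : (0:ℝ) < bb := by positivity
  have hkb : 2*((k:ℝ)+1)*(bb:ℝ) ≤ A/4 := by nlinarith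
  -- the numerator
  set N : ℝ := 2 * A * t ^ (2*a - 1) * g - D * T with hNdef
  have hDT : D * T ≤ 2*((k:ℝ)+1)*(bb:ℝ) * g := by nlinarith
  have hDTA : D * T ≤ (A/4) * g :=
    le_trans hDT (mul_le_mul_of_nonneg_right hkb (by linarith))
  have h5 : (A/2) * g ≤ 2 * A * t ^ (2*a-1) * g := by
    have h := mul_le_mul_of_nonneg_left htq (by positivity : (0:ℝ) ≤ 2*A*g)
    nlinarith [h]
  have hN : g * (A/4) ≤ N := by rw [hNdef]; nlinarith [h5, hDTA]
  have hgA4 : (0:ℝ) < g * (A/4) :=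
    mul_pos (lt_of_lt_of_le one_pos hg1) (by linarith)
  have hNpos : 0 < N := lt_of_lt_of_le hgA4 hN
  -- rewrite Wfun
  have hW : Wfun k t = N^2 / (g * T * (g + T)^2) := by
    rw [Wfun]
    rw [hNdef, hgdef, hDdef, hTdef, hAdef, ha]
    have hgT : gS (lbSet k) t * t ^ (2 * 2^2^k) ≠ 0 := by
      have : (0:ℝ) < gS (lbSet k) t := by rw [← hgdef]; linarith
      positivity
    have hgT2 : gS (lbSet k) t + t ^ (2 * 2^2^k) ≠ 0 := by
      have h1 : (0:ℝ) < gS (lbSet k) t := by rw [← hgdef]; linarith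
      have h2 : (0:ℝ) < t ^ (2 * 2^2^k) := pow_pos ht0 _
      positivity
    field_simp
  rw [hW]
  clear_value N T D g A a bb
  -- final inequality
  have hsk : (0:ℝ) < Real.sqrt ((k:ℝ)+1) := Real.sqrt_pos.mpr (by positivity)
  rw [Real.le_sqrt' (by positivity)]
  have hmsq : (A / (8 * Real.sqrt ((k:ℝ)+1)))^2 = A^2 / (64 * ((k:ℝ)+1)) := by
    rw [div_pow, mul_pow, Real.sq_sqrt (by positivity : (0:ℝ) ≤ (k:ℝ)+1)]
    norm_num
  rw [hmsq]
  have hDen : 0 < g * T * (g + T)^2 := by positivity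
  rw [div_le_div_iff₀ (by positivity) hDen]
  have h1 : g + T ≤ 2*g := by linarith
  have h2 : (g+T)^2 ≤ 4*g^2 := by nlinarith [h1, hT0, hg1]
  have h3 : g * T * (g+T)^2 ≤ 4*((k:ℝ)+1)*g^2 := by
    have ha1 : g * T ≤ g := by nlinarith [hg1, hT1, hT0]
    have hb1 : g * T * (g+T)^2 ≤ g * (4*g^2) := by
      refine mul_le_mul ha1 h2 (sq_nonneg _) (by linarith)
    have hc1 : g*(4*g^2) ≤ 4*((k:ℝ)+1)*g^2 := by
      nlinarith [mul_nonneg (sub_nonneg.mpr hgk) (sq_nonneg g)]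
    linarith [hb1, hc1]
  have h4 : (g*(A/4))^2 ≤ N^2 := by nlinarith [hN, hgA4, hNpos]
  have h5' : A^2 * (g*T*(g+T)^2) ≤ A^2 * (4*((k:ℝ)+1)*g^2) :=
    mul_le_mul_of_nonneg_left h3 (sq_nonneg A)
  have h6 : A^2 * (4*((k:ℝ)+1)*g^2) = (g*(A/4))^2 * (64*((k:ℝ)+1)) := by ring
  have h7 : (g*(A/4))^2 * (64*((k:ℝ)+1)) ≤ N^2 * (64*((k:ℝ)+1)) :=
    mul_le_mul_of_nonneg_right h4 (by positivity)
  linarith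

set_option maxHeartbeats 1000000 in
theorem stmt15 :
    ∃ c : ℝ, c > 0 ∧ ∃ K : ℕ, ∀ k : ℕ, K ≤ k →
      (∫ t in (1 - 1 / (2 * ((2 : ℝ) ^ 2 ^ k)))..1, Real.sqrt (Wfun k t)) ≥
        c / Real.sqrt k := by
  refine ⟨1/32, by norm_num, 6, fun k hk => ?_⟩
  have hk1 : 1 ≤ k := by omega
  set A : ℝ := (2:ℝ)^2^k with hA
  have hApos : (0:ℝ) < A := by positivity
  have hA2 : (2:ℝ) ≤ A := by
    rw [hA]
    calc (2:ℝ) = 2^1 := by norm_num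
    _ ≤ 2^2^k := by
      apply pow_le_pow_right₀ (by norm_num) Nat.one_le_two_pow
  set x : ℝ := 1 - 1/(2*A) with hx
  have hfrac : 1/(2*A) ≤ 1/4 := by
    rw [div_le_div_iff₀ (by linarith) (by norm_num)]; linarith
  have hfpos : 0 < 1/(2*A) := by positivity
  have hx1 : x ≤ 1 := by rw [hx]; linarith
  have hx0 : (0:ℝ) < x := by rw [hx]; linarith
  have huIcc : Set.uIcc x 1 = Set.Icc x 1 := Set.uIcc_of_le hx1
  have hsub : ∀ t ∈ Set.Icc x 1, 0 < t := fun t ht => lt_of_lt_of_le hx0 ht.1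
  -- continuity / integrability
  have hcont : ContinuousOn (fun t => Real.sqrt (Wfun k t)) (Set.Icc x 1) := by
    apply Real.continuous_sqrt.comp_continuousOn
    unfold Wfun
    apply ContinuousOn.mul
    · apply ContinuousOn.div continuousOn_const
      · exact ((gS_continuous _).mul (continuous_pow _)).continuousOn
      · intro t ht
        have h1 : (1:ℝ) ≤ gS (lbSet k) t := gS_one_le _ (lbSet_zero_mem k) t (hsub t ht).le
        have h2 : 0 < t ^ (2*2^2^k) := pow_pos (hsub t ht) _
        positivity
    · apply ContinuousOn.pow
      apply ContinuousOn.div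
      · exact (((continuous_const.mul (continuous_pow _)).mul (gS_continuous _)).sub
          ((gS_deriv_continuous _).mul (continuous_pow _))).continuousOn
      · exact ((gS_continuous _).add (continuous_pow _)).continuousOn
      · intro t ht
        have h1 : (1:ℝ) ≤ gS (lbSet k) t := gS_one_le _ (lbSet_zero_mem k) t (hsub t ht).le
        have h2 : 0 < t ^ (2*2^2^k) := pow_pos (hsub t ht) _
        positivity
  have hint : IntervalIntegrable (fun t => Real.sqrt (Wfun k t)) MeasureTheory.volume x 1 :=
    (by rw [huIcc]; exact hcont : ContinuousOn _ (Set.uIcc x 1)).intervalIntegrable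
  set m : ℝ := A / (8 * Real.sqrt ((k:ℝ)+1)) with hm
  have hkey : ∀ t ∈ Set.Icc x 1, m ≤ Real.sqrt (Wfun k t) := fun t ht => key k hk t ht
  have hmono := intervalIntegral.integral_mono_on hx1 intervalIntegrable_const hint hkey
  rw [intervalIntegral.integral_const] at hmono
  have hsk1 : (0:ℝ) < Real.sqrt ((k:ℝ)+1) := Real.sqrt_pos.mpr (by positivity)
  have h1x : 1 - x = 1/(2*A) := by rw [hx]; ring
  have hval : (1 - x) • m = 1 / (16 * Real.sqrt ((k:ℝ)+1)) := by
    rw [smul_eq_mul, h1x, hm]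
    rw [div_mul_div_comm, one_mul]
    rw [div_eq_div_iff (by positivity) (by positivity)]
    ring
  rw [hval] at hmono
  -- compare with c / sqrt k
  have hkpos : (0:ℝ) < (k:ℝ) := by exact_mod_cast (by omega : 0 < k)
  have hsk : 0 < Real.sqrt (k:ℝ) := Real.sqrt_pos.mpr hkpos
  have hcmp : Real.sqrt ((k:ℝ)+1) ≤ 2 * Real.sqrt (k:ℝ) := by
    have h4 : Real.sqrt 4 = 2 := by
      rw [show (4:ℝ) = 2^2 by norm_num, Real.sqrt_sq (by norm_num : (0:ℝ) ≤ 2)]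
    have hk1R : (1:ℝ) ≤ (k:ℝ) := by exact_mod_cast hk1
    calc Real.sqrt ((k:ℝ)+1) ≤ Real.sqrt (4*(k:ℝ)) := Real.sqrt_le_sqrt (by linarith)
    _ = 2 * Real.sqrt (k:ℝ) := by rw [Real.sqrt_mul (by norm_num : (0:ℝ) ≤ 4), h4]
  have hfinal : (1/32 : ℝ) / Real.sqrt (k:ℝ) ≤ 1 / (16 * Real.sqrt ((k:ℝ)+1)) := by
    rw [div_le_div_iff₀ hsk (by positivity)]
    nlinarith [hcmp, hsk, hsk1]
  exact le_trans hfinal hmono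
end
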